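/- arXiv:2508.12169 — 3 statements merged into one kernel-verified Lean document; each statement's English description precedes it below -/
import Mathlib

section
/- Let X ~ Beta(α, β) with α, β > 0. Then α·E[(1−X)·log(X/(1−X))] − β·E[X·log(X/(1−X))] = −1. -/
open MeasureTheory Real Filter

noncomputable def betaB (a b : ℝ) : ℝ := Real.Gamma a * Real.Gamma b / Real.Gamma (a + b)

/-- digamma function ψ = Γ'/Γ -/
noncomputable def digamma (z : ℝ) : ℝ := deriv Real.Gamma z / Real.Gamma z

/-- Beta(a,b) probability density on (0,1). -/
noncomputable def betaPDF (a b x : ℝ) : ℝ := x ^ (a - 1) * (1 - x) ^ (b - 1) / betaB a b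

/-- Expectation of `h(X)` for `X ~ Beta(a,b)`. -/
noncomputable def betaE (a b : ℝ) (h : ℝ → ℝ) : ℝ :=
  ∫ x in Set.Ioo (0:ℝ) 1, h x * betaPDF a b x

/-- Beta(a,b) measure on ℝ. -/
noncomputable def betaMeasure (a b : ℝ) : Measure ℝ :=
  volume.withDensity (fun x => ENNReal.ofReal (Set.indicator (Set.Ioo (0:ℝ) 1) (betaPDF a b) x))

open Set

lemma betaKernel_left {p : ℝ} (hp : 0 < p) (q : ℝ) :
    IntervalIntegrable (fun x : ℝ => x ^ (p - 1) * (1 - x) ^ (q - 1)) volume 0 (1 / 2) := by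
  apply IntervalIntegrable.mul_continuousOn
  · exact intervalIntegral.intervalIntegrable_rpow' (by linarith)
  · apply ContinuousOn.rpow_const
    · exact (continuous_const.sub continuous_id).continuousOn
    · intro x hx
      rw [uIcc_of_le (by norm_num : (0:ℝ) ≤ 1 / 2)] at hx
      left
      have : x ≤ 1 / 2 := hx.2
      intro h
      have h' : (1:ℝ) - x = 0 := h
      nlinarith

lemma betaKernel_intervalIntegrable {p q : ℝ} (hp : 0 < p) (hq : 0 < q) :
    IntervalIntegrable (fun x : ℝ => x ^ (p - 1) * (1 - x) ^ (q - 1)) volume 0 1 := by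
  refine (betaKernel_left hp q).trans ?_
  rw [IntervalIntegrable.iff_comp_neg]
  convert ((betaKernel_left hq p).comp_add_right 1).symm using 1
  · ext1 x
    conv_lhs => rw [mul_comm]
    congr 2 <;> ring
  · norm_num
  · norm_num

lemma betaKernel_integrableOn {p q : ℝ} (hp : 0 < p) (hq : 0 < q) :
    IntegrableOn (fun x : ℝ => x ^ (p - 1) * (1 - x) ^ (q - 1)) (Ioo 0 1) volume := by
  rw [← intervalIntegrable_iff_integrableOn_Ioo_of_le (by norm_num : (0:ℝ) ≤ 1)]
  exact betaKernel_intervalIntegrable hp hq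

lemma neg_log_le {p x : ℝ} (hp : 0 < p) (hx : 0 < x) :
    -Real.log x ≤ (2 / p) * x ^ (-(p / 2)) := by
  have h1 : Real.log (x ^ (-(p / 2))) = -(p / 2) * Real.log x := Real.log_rpow hx _
  have h2 : Real.log (x ^ (-(p / 2))) ≤ x ^ (-(p / 2)) := by
    have := Real.log_le_sub_one_of_pos (Real.rpow_pos_of_pos hx (-(p / 2)))
    linarith
  rw [h1] at h2
  have hp' : 0 < 2 / p := by positivity
  have h3 := mul_le_mul_of_nonneg_left h2 hp'.le
  have h4 : (2 / p) * (-(p / 2) * Real.log x) = -Real.log x := by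
    field_simp
  rw [h4] at h3
  exact h3

lemma contOn_logKernel {p q : ℝ} :
    ContinuousOn (fun x : ℝ => Real.log x * (x ^ (p - 1) * (1 - x) ^ (q - 1))) (Ioo 0 1) := by
  intro x hx
  apply ContinuousAt.continuousWithinAt
  have hx0 : x ≠ 0 := ne_of_gt hx.1
  have hx1 : (1 : ℝ) - x ≠ 0 := by have := hx.2; intro h; linarith [sub_eq_zero.mp h]
  exact (Real.continuousAt_log hx0).mul
    (((Real.continuousAt_rpow_const x _ (Or.inl hx0)).mul
      (((continuous_const.sub continuous_id).continuousAt).rpow_const (Or.inl hx1))))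

lemma contOn_log1mKernel {p q : ℝ} :
    ContinuousOn (fun x : ℝ => Real.log (1 - x) * (x ^ (p - 1) * (1 - x) ^ (q - 1))) (Ioo 0 1) := by
  intro x hx
  apply ContinuousAt.continuousWithinAt
  have hx0 : x ≠ 0 := ne_of_gt hx.1
  have hx1 : (1 : ℝ) - x ≠ 0 := by have := hx.2; intro h; linarith [sub_eq_zero.mp h]
  exact ((Real.continuousAt_log hx1).comp ((continuous_const.sub continuous_id).continuousAt)).mul
    (((Real.continuousAt_rpow_const x _ (Or.inl hx0)).mul
      (((continuous_const.sub continuous_id).continuousAt).rpow_const (Or.inl hx1))))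

lemma betaKernel_log_integrableOn {p q : ℝ} (hp : 0 < p) (hq : 0 < q) :
    IntegrableOn (fun x : ℝ => Real.log x * (x ^ (p - 1) * (1 - x) ^ (q - 1))) (Ioo 0 1) volume := by
  have base : IntegrableOn (fun x : ℝ => (2 / p) * (x ^ (p / 2 - 1) * (1 - x) ^ (q - 1)))
      (Ioo 0 1) volume := (betaKernel_integrableOn (by positivity : (0:ℝ) < p / 2) hq).const_mul _
  refine base.mono' (contOn_logKernel.aestronglyMeasurable measurableSet_Ioo) ?_
  filter_upwards [ae_restrict_mem measurableSet_Ioo] with x hx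
  have hx0 : (0:ℝ) < x := hx.1
  have hx1 : x < 1 := hx.2
  have h1x : (0:ℝ) < 1 - x := by linarith
  have hker : (0:ℝ) ≤ x ^ (p - 1) * (1 - x) ^ (q - 1) := by positivity
  rw [norm_mul, norm_mul, Real.norm_eq_abs, Real.norm_eq_abs, Real.norm_eq_abs,
    abs_of_nonneg (Real.rpow_pos_of_pos hx0 _).le, abs_of_nonneg (Real.rpow_pos_of_pos h1x _).le]
  have hlog : |Real.log x| ≤ (2 / p) * x ^ (-(p / 2)) := by
    rw [abs_of_nonpos (Real.log_nonpos hx0.le hx1.le)]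
    exact neg_log_le hp hx0
  have hmul : x ^ (-(p / 2)) * x ^ (p - 1) = x ^ (p / 2 - 1) := by
    rw [← Real.rpow_add hx0]; ring_nf
  calc |Real.log x| * (x ^ (p - 1) * (1 - x) ^ (q - 1))
      ≤ ((2 / p) * x ^ (-(p / 2))) * (x ^ (p - 1) * (1 - x) ^ (q - 1)) := by
        apply mul_le_mul_of_nonneg_right hlog hker
    _ = (2 / p) * (x ^ (p / 2 - 1) * (1 - x) ^ (q - 1)) := by
        rw [← hmul]; ring

lemma betaKernel_log1m_integrableOn {p q : ℝ} (hp : 0 < p) (hq : 0 < q) :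
    IntegrableOn (fun x : ℝ => Real.log (1 - x) * (x ^ (p - 1) * (1 - x) ^ (q - 1)))
      (Ioo 0 1) volume := by
  have base : IntegrableOn (fun x : ℝ => (2 / q) * (x ^ (p - 1) * (1 - x) ^ (q / 2 - 1)))
      (Ioo 0 1) volume := (betaKernel_integrableOn hp (by positivity : (0:ℝ) < q / 2)).const_mul _
  refine base.mono' (contOn_log1mKernel.aestronglyMeasurable measurableSet_Ioo) ?_
  filter_upwards [ae_restrict_mem measurableSet_Ioo] with x hx
  have hx0 : (0:ℝ) < x := hx.1
  have hx1 : x < 1 := hx.2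
  have h1x : (0:ℝ) < 1 - x := by linarith
  have hker : (0:ℝ) ≤ x ^ (p - 1) * (1 - x) ^ (q - 1) := by positivity
  rw [norm_mul, norm_mul, Real.norm_eq_abs, Real.norm_eq_abs, Real.norm_eq_abs,
    abs_of_nonneg (Real.rpow_pos_of_pos hx0 _).le, abs_of_nonneg (Real.rpow_pos_of_pos h1x _).le]
  have hlog : |Real.log (1 - x)| ≤ (2 / q) * (1 - x) ^ (-(q / 2)) := by
    rw [abs_of_nonpos (Real.log_nonpos h1x.le (by linarith))]
    exact neg_log_le hq h1x
  have hmul : (1 - x) ^ (-(q / 2)) * (1 - x) ^ (q - 1) = (1 - x) ^ (q / 2 - 1) := by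
    rw [← Real.rpow_add h1x]; ring_nf
  calc |Real.log (1 - x)| * (x ^ (p - 1) * (1 - x) ^ (q - 1))
      ≤ ((2 / q) * (1 - x) ^ (-(q / 2))) * (x ^ (p - 1) * (1 - x) ^ (q - 1)) := by
        apply mul_le_mul_of_nonneg_right hlog hker
    _ = (2 / q) * (x ^ (p - 1) * (1 - x) ^ (q / 2 - 1)) := by
        rw [← hmul]; ring

lemma betaIntegral_real {p q : ℝ} (hp : 0 < p) (hq : 0 < q) :
    ∫ x in Ioo (0:ℝ) 1, x ^ (p - 1) * (1 - x) ^ (q - 1) = betaB p q := by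
  have hc := Complex.Gamma_mul_Gamma_eq_betaIntegral (s := (p : ℂ)) (t := (q : ℂ))
    (by simpa using hp) (by simpa using hq)
  have hcongr : Complex.betaIntegral (p : ℂ) (q : ℂ)
      = ((∫ x in (0:ℝ)..1, x ^ (p - 1) * (1 - x) ^ (q - 1) : ℝ) : ℂ) := by
    rw [Complex.betaIntegral, ← intervalIntegral.integral_ofReal]
    apply intervalIntegral.integral_congr_ae
    filter_upwards [compl_mem_ae_iff.mpr (Real.volume_singleton (a := 1))] with x hx hmem
    rw [uIoc_of_le (by norm_num : (0:ℝ) ≤ 1)] at hmem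
    have hx0 : (0:ℝ) ≤ x := hmem.1.le
    have hx1 : x < 1 := lt_of_le_of_ne hmem.2 hx
    have h1x : (0:ℝ) ≤ 1 - x := by linarith
    rw [Complex.ofReal_mul, Complex.ofReal_cpow hx0, Complex.ofReal_cpow h1x]
    push_cast
    ring
  rw [hcongr] at hc
  have hval : (∫ x in (0:ℝ)..1, x ^ (p - 1) * (1 - x) ^ (q - 1) : ℝ) = betaB p q := by
    have hG : Real.Gamma (p + q) ≠ 0 := (Real.Gamma_pos_of_pos (by linarith)).ne'
    have := hc
    rw [← Complex.ofReal_add, Complex.Gamma_ofReal, Complex.Gamma_ofReal,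
      Complex.Gamma_ofReal, ← Complex.ofReal_mul, ← Complex.ofReal_mul] at this
    have h2 : Real.Gamma p * Real.Gamma q
        = Real.Gamma (p + q) * ∫ x in (0:ℝ)..1, x ^ (p - 1) * (1 - x) ^ (q - 1) := by
      exact_mod_cast this
    rw [betaB]
    field_simp
    linarith [h2]
  rw [← hval, intervalIntegral.integral_of_le (by norm_num : (0:ℝ) ≤ 1),
    integral_Ioc_eq_integral_Ioo]

theorem beta_score_identity_logit (α β : ℝ) (hα : 0 < α) (hβ : 0 < β) :
    α * betaE α β (fun x => (1 - x) * Real.log (x / (1 - x)))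
      - β * betaE α β (fun x => x * Real.log (x / (1 - x))) = -1 := by
  have hαβ : (0:ℝ) < α + β := by linarith
  have hB : 0 < betaB α β :=
    div_pos (mul_pos (Real.Gamma_pos_of_pos hα) (Real.Gamma_pos_of_pos hβ))
      (Real.Gamma_pos_of_pos hαβ)
  have hβ1 : (0:ℝ) < β + 1 := by linarith
  have hα1 : (0:ℝ) < α + 1 := by linarith
  -- integrability facts
  have iA1 : IntegrableOn (fun x : ℝ => Real.log x * (x ^ (α - 1) * (1 - x) ^ β))
      (Ioo 0 1) volume := by simpa using betaKernel_log_integrableOn hα hβ1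
  have iA2 : IntegrableOn (fun x : ℝ => Real.log (1 - x) * (x ^ (α - 1) * (1 - x) ^ β))
      (Ioo 0 1) volume := by simpa using betaKernel_log1m_integrableOn hα hβ1
  have iB1 : IntegrableOn (fun x : ℝ => Real.log x * (x ^ α * (1 - x) ^ (β - 1)))
      (Ioo 0 1) volume := by simpa using betaKernel_log_integrableOn hα1 hβ
  have iB2 : IntegrableOn (fun x : ℝ => Real.log (1 - x) * (x ^ α * (1 - x) ^ (β - 1)))
      (Ioo 0 1) volume := by simpa using betaKernel_log1m_integrableOn hα1 hβ
  have iK : IntegrableOn (fun x : ℝ => x ^ (α - 1) * (1 - x) ^ β) (Ioo 0 1) volume := by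
    simpa using betaKernel_integrableOn hα hβ1
  have iK2 : IntegrableOn (fun x : ℝ => x ^ α * (1 - x) ^ (β - 1)) (Ioo 0 1) volume := by
    simpa using betaKernel_integrableOn hα1 hβ
  have ih1 : IntegrableOn
      (fun x : ℝ => (Real.log x - Real.log (1 - x)) * (x ^ (α - 1) * (1 - x) ^ β))
      (Ioo 0 1) volume := by
    have h : (fun x : ℝ => (Real.log x - Real.log (1 - x)) * (x ^ (α - 1) * (1 - x) ^ β))
        = fun x => Real.log x * (x ^ (α - 1) * (1 - x) ^ β)
            - Real.log (1 - x) * (x ^ (α - 1) * (1 - x) ^ β) := by funext x; ring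
    rw [h]; exact iA1.sub iA2
  have ih2 : IntegrableOn
      (fun x : ℝ => (Real.log x - Real.log (1 - x)) * (x ^ α * (1 - x) ^ (β - 1)))
      (Ioo 0 1) volume := by
    have h : (fun x : ℝ => (Real.log x - Real.log (1 - x)) * (x ^ α * (1 - x) ^ (β - 1)))
        = fun x => Real.log x * (x ^ α * (1 - x) ^ (β - 1))
            - Real.log (1 - x) * (x ^ α * (1 - x) ^ (β - 1)) := by funext x; ring
    rw [h]; exact iB1.sub iB2
  have iφ : IntegrableOn (fun x : ℝ => (Real.log x - Real.log (1 - x))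
      * (α * (x ^ (α - 1) * (1 - x) ^ β) - β * (x ^ α * (1 - x) ^ (β - 1))))
      (Ioo 0 1) volume := by
    have h : (fun x : ℝ => (Real.log x - Real.log (1 - x))
        * (α * (x ^ (α - 1) * (1 - x) ^ β) - β * (x ^ α * (1 - x) ^ (β - 1))))
        = fun x => α * ((Real.log x - Real.log (1 - x)) * (x ^ (α - 1) * (1 - x) ^ β))
            - β * ((Real.log x - Real.log (1 - x)) * (x ^ α * (1 - x) ^ (β - 1))) := by
      funext x; ring
    rw [h]; exact (ih1.const_mul α).sub (ih2.const_mul β)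
  -- the FTC step
  have eqon : EqOn
      (fun x : ℝ => (x ^ (α - 1) * (1 - x) ^ β + x ^ α * (1 - x) ^ (β - 1))
        + (Real.log x - Real.log (1 - x))
          * (α * (x ^ (α - 1) * (1 - x) ^ β) - β * (x ^ α * (1 - x) ^ (β - 1))))
      (fun x : ℝ => (x⁻¹ + (1 - x)⁻¹) * (x ^ α * (1 - x) ^ β)
        + (Real.log x - Real.log (1 - x))
          * (α * (x ^ (α - 1) * (1 - x) ^ β) - β * (x ^ α * (1 - x) ^ (β - 1))))
      (Ioo 0 1) := by
    intro x hx
    have hx0 : (0:ℝ) < x := hx.1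
    have h1x : (0:ℝ) < 1 - x := by have := hx.2; linarith
    have e1 : x ^ (α - 1) = x ^ α * x⁻¹ := by
      rw [Real.rpow_sub hx0, Real.rpow_one, div_eq_mul_inv]
    have e2 : (1 - x) ^ (β - 1) = (1 - x) ^ β * (1 - x)⁻¹ := by
      rw [Real.rpow_sub h1x, Real.rpow_one, div_eq_mul_inv]
    simp only [e1, e2]
    ring
  have iψ : IntegrableOn (fun x : ℝ => (x⁻¹ + (1 - x)⁻¹) * (x ^ α * (1 - x) ^ β)
      + (Real.log x - Real.log (1 - x))
        * (α * (x ^ (α - 1) * (1 - x) ^ β) - β * (x ^ α * (1 - x) ^ (β - 1))))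
      (Ioo 0 1) volume := by
    have iΨ : IntegrableOn (fun x : ℝ => (x ^ (α - 1) * (1 - x) ^ β + x ^ α * (1 - x) ^ (β - 1))
        + (Real.log x - Real.log (1 - x))
          * (α * (x ^ (α - 1) * (1 - x) ^ β) - β * (x ^ α * (1 - x) ^ (β - 1))))
        (Ioo 0 1) volume := (iK.add iK2).add iφ
    exact iΨ.congr_fun eqon measurableSet_Ioo
  have iψ' : IntervalIntegrable (fun x : ℝ => (x⁻¹ + (1 - x)⁻¹) * (x ^ α * (1 - x) ^ β)
      + (Real.log x - Real.log (1 - x))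
        * (α * (x ^ (α - 1) * (1 - x) ^ β) - β * (x ^ α * (1 - x) ^ (β - 1))))
      volume 0 1 := by
    rw [intervalIntegrable_iff_integrableOn_Ioo_of_le (by norm_num : (0:ℝ) ≤ 1)]
    exact iψ
  have hG : ∀ x ∈ Ioo (0:ℝ) 1, HasDerivAt
      (fun y : ℝ => (Real.log y - Real.log (1 - y)) * (y ^ α * (1 - y) ^ β))
      ((x⁻¹ + (1 - x)⁻¹) * (x ^ α * (1 - x) ^ β)
        + (Real.log x - Real.log (1 - x))
          * (α * (x ^ (α - 1) * (1 - x) ^ β) - β * (x ^ α * (1 - x) ^ (β - 1)))) x := by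
    intro x hx
    have hx0 : (0:ℝ) < x := hx.1
    have h1x : (0:ℝ) < 1 - x := by have := hx.2; linarith
    have dsub : HasDerivAt (fun y : ℝ => 1 - y) (-1) x := by
      simpa using (hasDerivAt_id x).const_sub 1
    have d1 : HasDerivAt (fun y : ℝ => Real.log y - Real.log (1 - y)) (x⁻¹ + (1 - x)⁻¹) x := by
      have hl1 := Real.hasDerivAt_log hx0.ne'
      have hl2 := (Real.hasDerivAt_log h1x.ne').comp x dsub
      refine (hl1.sub hl2).congr_deriv ?_
      simp [Function.comp]
    have d2 : HasDerivAt (fun y : ℝ => y ^ α * (1 - y) ^ β)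
        (α * (x ^ (α - 1) * (1 - x) ^ β) - β * (x ^ α * (1 - x) ^ (β - 1))) x := by
      have hr1 := Real.hasDerivAt_rpow_const (x := x) (p := α) (Or.inl hx0.ne')
      have hr2 := (Real.hasDerivAt_rpow_const (x := 1 - x) (p := β) (Or.inl h1x.ne')).comp x dsub
      refine (hr1.mul hr2).congr_deriv ?_
      simp [Function.comp]
      ring
    exact d1.mul d2
  -- limits at the endpoints
  have T1 := tendsto_log_mul_rpow_nhdsGT_zero hα
  have Tc : Tendsto (fun x : ℝ => (1 - x) ^ β) (nhds 0) (nhds 1) := by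
    have hc : ContinuousAt (fun x : ℝ => (1 - x) ^ β) 0 :=
      ((continuous_const.sub continuous_id).continuousAt).rpow_const (Or.inl (by norm_num))
    have := hc.tendsto
    simpa using this
  have T2 : Tendsto (fun x : ℝ => (1 - x) ^ β) (nhdsWithin 0 (Ioi 0)) (nhds 1) :=
    Tc.mono_left nhdsWithin_le_nhds
  have T3 : Tendsto (fun x : ℝ => Real.log (1 - x)) (nhdsWithin 0 (Ioi 0)) (nhds 0) := by
    have hc : ContinuousAt (fun x : ℝ => Real.log (1 - x)) 0 :=
      (Real.continuousAt_log (by norm_num : (1:ℝ) - 0 ≠ 0)).comp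
        ((continuous_const.sub continuous_id).continuousAt)
    have := hc.tendsto
    simp at this
    exact this.mono_left nhdsWithin_le_nhds
  have T4 : Tendsto (fun x : ℝ => x ^ α) (nhdsWithin 0 (Ioi 0)) (nhds 0) := by
    have hc := (Real.continuousAt_rpow_const 0 α (Or.inr hα.le)).tendsto
    rw [Real.zero_rpow hα.ne'] at hc
    exact hc.mono_left nhdsWithin_le_nhds
  have lim0 : Tendsto (fun x : ℝ => (Real.log x - Real.log (1 - x)) * (x ^ α * (1 - x) ^ β))
      (nhdsWithin 0 (Ioi 0)) (nhds 0) := by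
    have h := (T1.mul T2).sub ((T3.mul T4).mul T2)
    norm_num at h
    exact h.congr (fun x => by ring)
  have hmap : Tendsto (fun x : ℝ => 1 - x) (nhdsWithin 1 (Iio 1)) (nhdsWithin 0 (Ioi 0)) := by
    apply tendsto_nhdsWithin_of_tendsto_nhds_of_eventually_within
    · have h : Tendsto (fun x : ℝ => 1 - x) (nhds 1) (nhds 0) := by
        have hcont : Continuous (fun x : ℝ => 1 - x) := by continuity
        have := hcont.tendsto (1:ℝ)
        simpa using this
      exact h.mono_left nhdsWithin_le_nhds
    · filter_upwards [self_mem_nhdsWithin] with x hx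
      simp only [mem_Iio] at hx
      simp only [mem_Ioi]
      linarith
  have U1 : Tendsto (fun x : ℝ => Real.log (1 - x) * (1 - x) ^ β)
      (nhdsWithin 1 (Iio 1)) (nhds 0) := (tendsto_log_mul_rpow_nhdsGT_zero hβ).comp hmap
  have U2 : Tendsto (fun x : ℝ => x ^ α) (nhdsWithin 1 (Iio 1)) (nhds 1) := by
    have hc := (Real.continuousAt_rpow_const 1 α (Or.inl one_ne_zero)).tendsto
    rw [Real.one_rpow] at hc
    exact hc.mono_left nhdsWithin_le_nhds
  have U3 : Tendsto (fun x : ℝ => Real.log x) (nhdsWithin 1 (Iio 1)) (nhds 0) := by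
    have hc := (Real.continuousAt_log one_ne_zero).tendsto
    rw [Real.log_one] at hc
    exact hc.mono_left nhdsWithin_le_nhds
  have U4 : Tendsto (fun x : ℝ => (1 - x) ^ β) (nhdsWithin 1 (Iio 1)) (nhds 0) := by
    have hc := (Real.continuousAt_rpow_const 0 β (Or.inr hβ.le)).tendsto
    rw [Real.zero_rpow hβ.ne'] at hc
    exact hc.comp (hmap.mono_right nhdsWithin_le_nhds)
  have lim1 : Tendsto (fun x : ℝ => (Real.log x - Real.log (1 - x)) * (x ^ α * (1 - x) ^ β))
      (nhdsWithin 1 (Iio 1)) (nhds 0) := by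
    have h := ((U3.mul U2).mul U4).sub (U1.mul U2)
    norm_num at h
    exact h.congr (fun x => by ring)
  have ftc := intervalIntegral.integral_eq_sub_of_hasDerivAt_of_tendsto
    (by norm_num : (0:ℝ) < 1) hG iψ' lim0 lim1
  rw [intervalIntegral.integral_of_le (by norm_num : (0:ℝ) ≤ 1),
    integral_Ioc_eq_integral_Ioo] at ftc
  have hIoo : ∫ x in Ioo (0:ℝ) 1, ((x⁻¹ + (1 - x)⁻¹) * (x ^ α * (1 - x) ^ β)
      + (Real.log x - Real.log (1 - x))
        * (α * (x ^ (α - 1) * (1 - x) ^ β) - β * (x ^ α * (1 - x) ^ (β - 1)))) = 0 := by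
    rw [ftc]; ring
  -- value of the kernel-sum integral
  have hKsum : ∫ x in Ioo (0:ℝ) 1, (x ^ (α - 1) * (1 - x) ^ β + x ^ α * (1 - x) ^ (β - 1))
      = betaB α β := by
    rw [setIntegral_congr_fun (g := fun x : ℝ => x ^ (α - 1) * (1 - x) ^ (β - 1))
      measurableSet_Ioo ?_, betaIntegral_real hα hβ]
    intro x hx
    have hx0 : (0:ℝ) < x := hx.1
    have h1x : (0:ℝ) < 1 - x := by have := hx.2; linarith
    have e3 : (1 - x) ^ β = (1 - x) ^ (β - 1) * (1 - x) := by
      rw [Real.rpow_sub h1x, Real.rpow_one]; field_simp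
    have e4 : x ^ α = x ^ (α - 1) * x := by
      rw [Real.rpow_sub hx0, Real.rpow_one]; field_simp
    simp only [e3, e4]
    ring
  have hsplit : ∫ x in Ioo (0:ℝ) 1, ((x⁻¹ + (1 - x)⁻¹) * (x ^ α * (1 - x) ^ β)
      + (Real.log x - Real.log (1 - x))
        * (α * (x ^ (α - 1) * (1 - x) ^ β) - β * (x ^ α * (1 - x) ^ (β - 1))))
      = (∫ x in Ioo (0:ℝ) 1, (x ^ (α - 1) * (1 - x) ^ β + x ^ α * (1 - x) ^ (β - 1)))
        + ∫ x in Ioo (0:ℝ) 1, (Real.log x - Real.log (1 - x))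
            * (α * (x ^ (α - 1) * (1 - x) ^ β) - β * (x ^ α * (1 - x) ^ (β - 1))) := by
    rw [← setIntegral_congr_fun measurableSet_Ioo eqon]
    exact integral_add (iK.add iK2) iφ
  have hφval : ∫ x in Ioo (0:ℝ) 1, (Real.log x - Real.log (1 - x))
      * (α * (x ^ (α - 1) * (1 - x) ^ β) - β * (x ^ α * (1 - x) ^ (β - 1)))
      = -betaB α β := by
    rw [hsplit, hKsum] at hIoo
    linarith
  -- express the expectations
  have hE1 : betaE α β (fun x => (1 - x) * Real.log (x / (1 - x)))
      = (∫ x in Ioo (0:ℝ) 1, (Real.log x - Real.log (1 - x)) * (x ^ (α - 1) * (1 - x) ^ β))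
        / betaB α β := by
    rw [betaE, ← integral_div]
    apply setIntegral_congr_fun measurableSet_Ioo
    intro x hx
    have hx0 : (0:ℝ) < x := hx.1
    have h1x : (0:ℝ) < 1 - x := by have := hx.2; linarith
    have e3 : (1 - x) ^ β = (1 - x) ^ (β - 1) * (1 - x) := by
      rw [Real.rpow_sub h1x, Real.rpow_one]; field_simp
    simp only [betaPDF]
    rw [Real.log_div hx0.ne' h1x.ne', e3]
    ring
  have hE2 : betaE α β (fun x => x * Real.log (x / (1 - x)))
      = (∫ x in Ioo (0:ℝ) 1, (Real.log x - Real.log (1 - x)) * (x ^ α * (1 - x) ^ (β - 1)))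
        / betaB α β := by
    rw [betaE, ← integral_div]
    apply setIntegral_congr_fun measurableSet_Ioo
    intro x hx
    have hx0 : (0:ℝ) < x := hx.1
    have h1x : (0:ℝ) < 1 - x := by have := hx.2; linarith
    have e4 : x ^ α = x ^ (α - 1) * x := by
      rw [Real.rpow_sub hx0, Real.rpow_one]; field_simp
    simp only [betaPDF]
    rw [Real.log_div hx0.ne' h1x.ne', e4]
    ring
  rw [hE1, hE2]
  have key : α * (∫ x in Ioo (0:ℝ) 1,
        (Real.log x - Real.log (1 - x)) * (x ^ (α - 1) * (1 - x) ^ β))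
      - β * (∫ x in Ioo (0:ℝ) 1,
        (Real.log x - Real.log (1 - x)) * (x ^ α * (1 - x) ^ (β - 1)))
      = -betaB α β := by
    rw [← integral_const_mul, ← integral_const_mul,
      ← integral_sub (ih1.const_mul α) (ih2.const_mul β), ← hφval]
    apply setIntegral_congr_fun measurableSet_Ioo
    intro x _
    ring
  have hfin : α * ((∫ x in Ioo (0:ℝ) 1,
        (Real.log x - Real.log (1 - x)) * (x ^ (α - 1) * (1 - x) ^ β)) / betaB α β)
      - β * ((∫ x in Ioo (0:ℝ) 1,
        (Real.log x - Real.log (1 - x)) * (x ^ α * (1 - x) ^ (β - 1))) / betaB α β)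
      = (α * (∫ x in Ioo (0:ℝ) 1,
          (Real.log x - Real.log (1 - x)) * (x ^ (α - 1) * (1 - x) ^ β))
        - β * (∫ x in Ioo (0:ℝ) 1,
          (Real.log x - Real.log (1 - x)) * (x ^ α * (1 - x) ^ (β - 1)))) / betaB α β := by
    ring
  rw [hfin, key, neg_div, div_self hB.ne']
end

section
/- Let X ~ Beta(α, β) with α, β > 0. Then −α·E[((1−X)/X)·log(1−X)] + β·E[log(1−X)] = −1 − E[((1−X)/X)·log(1−X)]. -/
open MeasureTheory Real Filter Set Topology

-- continuity of integrands on Ioo 0 1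
lemma contOn_aux (c b : ℝ) : ContinuousOn (fun x : ℝ => Real.log (1-x) * (x ^ c * (1-x) ^ b)) (Ioo 0 1) := by
  intro x hx
  have h1 : (0:ℝ) < x := hx.1
  have h2 : (0:ℝ) < 1 - x := by linarith [hx.2]
  apply ContinuousWithinAt.mul
  · exact ((Real.continuousAt_log h2.ne').comp (by fun_prop)).continuousWithinAt
  · apply ContinuousWithinAt.mul
    · exact ((Real.continuousAt_rpow_const x c (Or.inl h1.ne')).continuousWithinAt)
    · exact (((Real.continuousAt_rpow_const _ b (Or.inl h2.ne')).comp (by fun_prop)).continuousWithinAt)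

-- integrability of (1-x)^r on Ico (1/2) 1 for  r > -1
lemma int_one_sub_rpow {r : ℝ} (hr : -1 < r) :
    IntegrableOn (fun x : ℝ => (1-x) ^ r) (Ico (1/2 : ℝ) 1) := by
  have h : IntervalIntegrable (fun x : ℝ => x ^ r) volume 0 (1/2) :=
    intervalIntegral.intervalIntegrable_rpow' hr
  have h2 := h.comp_sub_left 1
  have h3 : IntegrableOn (fun x : ℝ => (1-x) ^ r) (Ioc (1/2 : ℝ) 1) := by
    have h2' : IntervalIntegrable (fun x : ℝ => (1-x) ^ r) volume (1/2) 1 := by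
      norm_num at h2; simpa using h2.symm
    exact (intervalIntegrable_iff_integrableOn_Ioc_of_le (by norm_num : (1/2:ℝ) ≤ 1)).mp h2'
  have : IntegrableOn (fun x : ℝ => (1-x) ^ r) (Ico (1/2 : ℝ) 1 \ Ioc (1/2:ℝ) 1) := by
    have hsub : Ico (1/2 : ℝ) 1 \ Ioc (1/2:ℝ) 1 ⊆ {(1/2 : ℝ)} := by
      intro x hx
      simp only [mem_diff, mem_Ico, mem_Ioc, not_and, not_le, mem_singleton_iff] at *
      rcases hx with ⟨⟨h1, h2⟩, h3⟩
      by_contra hne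
      have := h3 (lt_of_le_of_ne h1 (Ne.symm hne))
      linarith
    exact ((integrableOn_singleton_iff).mpr (Or.inr (by simp))).mono_set hsub
  have := h3.union this
  refine this.mono_set ?_
  intro x hx
  simp only [mem_Ico] at hx
  by_cases h : x = 1/2
  · right; simp [mem_Ico, h]; norm_num
  · left; exact ⟨lt_of_le_of_ne hx.1 (Ne.symm h), hx.2.le⟩

lemma contOn_aux2 (c b : ℝ) : ContinuousOn (fun x : ℝ => x ^ c * (1-x) ^ b) (Ioo 0 1) := by
  intro x hx
  have h1 : (0:ℝ) < x := hx.1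
  have h2 : (0:ℝ) < 1 - x := by linarith [hx.2]
  apply ContinuousWithinAt.mul
  · exact ((Real.continuousAt_rpow_const x c (Or.inl h1.ne')).continuousWithinAt)
  · exact (((Real.continuousAt_rpow_const _ b (Or.inl h2.ne')).comp (by fun_prop)).continuousWithinAt)

lemma bound_rpow_near_one {x c : ℝ} (hx : (1/2:ℝ) ≤ x) (hx1 : x ≤ 1) : x ^ c ≤ 2 ^ |c| := by
  have hx0 : (0:ℝ) < x := by linarith
  rcases le_or_gt 0 c with h | h
  · calc x ^ c ≤ 1 ^ c := Real.rpow_le_rpow hx0.le hx1 h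
    _ = 1 := Real.one_rpow c
    _ ≤ 2 ^ |c| := Real.one_le_rpow one_le_two (abs_nonneg c)
  · have : x ^ c ≤ (1/2 : ℝ) ^ c := Real.rpow_le_rpow_of_nonpos (by norm_num) hx h.le
    calc x ^ c ≤ (1/2 : ℝ) ^ c := this
      _ = 2 ^ (-c) := by rw [one_div, Real.inv_rpow (by norm_num : (0:ℝ) ≤ 2), ← Real.rpow_neg (by norm_num : (0:ℝ) ≤ 2)]
      _ = 2 ^ |c| := by rw [abs_of_neg h]

lemma neg_log_le_near_zero {x : ℝ} (hx : 0 < x) (hx2 : x ≤ 1/2) : -Real.log (1-x) ≤ 2 * x := by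
  have h2 : (0:ℝ) < 1 - x := by linarith
  have : -Real.log (1-x) = Real.log (1-x)⁻¹ := by rw [Real.log_inv]
  rw [this]
  calc Real.log (1-x)⁻¹ ≤ (1-x)⁻¹ - 1 := Real.log_le_sub_one_of_pos (by positivity)
    _ = x / (1-x) := by field_simp; ring
    _ ≤ x / (1/2) := by gcongr; linarith
    _ = 2 * x := by ring

lemma neg_log_le_near_one {x ε : ℝ} (hx : 0 < x) (hx1 : x < 1) (hε : 0 < ε) :
    -Real.log (1-x) ≤ (1-x) ^ (-ε) / ε := by
  have h2 : (0:ℝ) < 1 - x := by linarith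
  have : -Real.log (1-x) = Real.log (1-x)⁻¹ := by rw [Real.log_inv]
  rw [this, Real.rpow_neg h2.le, ← Real.inv_rpow h2.le]
  exact Real.log_le_rpow_div (by positivity) hε

lemma integrableOn_log_pow (c b : ℝ) (hc : -2 < c) (hb : -1 < b) :
    IntegrableOn (fun x : ℝ => Real.log (1-x) * (x ^ c * (1-x) ^ b)) (Ioo 0 1) := by
  set f := fun x : ℝ => Real.log (1-x) * (x ^ c * (1-x) ^ b) with hf
  have hmeas : ∀ s ⊆ Ioo (0:ℝ) 1, MeasurableSet s → AEStronglyMeasurable f (volume.restrict s) :=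
    fun s hs hms => ((contOn_aux c b).mono hs).aestronglyMeasurable hms
  have hA : IntegrableOn f (Ioo 0 (1/2 : ℝ)) := by
    have hg : IntegrableOn (fun x : ℝ => 2 * 2 ^ |b| * x ^ (c+1)) (Ioo 0 (1/2 : ℝ)) := by
      have := (intervalIntegral.intervalIntegrable_rpow' (show -1 < c + 1 by linarith)
        (a := 0) (b := (1/2:ℝ)))
      have h2 := (intervalIntegrable_iff_integrableOn_Ioc_of_le (by norm_num : (0:ℝ) ≤ 1/2)).mp this
      exact ((h2.mono_set Ioo_subset_Ioc_self).const_mul _)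
    refine hg.integrable.mono' (hmeas _ (fun x hx => ⟨hx.1, by linarith [hx.2]⟩) measurableSet_Ioo) ?_
    rw [ae_restrict_iff' measurableSet_Ioo]
    filter_upwards with x hx
    have hx0 : (0:ℝ) < x := hx.1
    have h2 : (0:ℝ) < 1 - x := by linarith [hx.2]
    have hxh : x ≤ 1/2 := hx.2.le
    have hb1 : (1-x) ^ b ≤ 2 ^ |b| := bound_rpow_near_one (by linarith) (by linarith)
    have hlog : -Real.log (1-x) ≤ 2 * x := neg_log_le_near_zero hx0 hxh
    have hlogpos : Real.log (1-x) ≤ 0 := Real.log_nonpos (by linarith) (by linarith)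
    rw [hf]
    simp only [norm_mul, Real.norm_eq_abs]
    rw [abs_of_nonpos hlogpos, abs_of_nonneg (Real.rpow_nonneg hx0.le c),
      abs_of_nonneg (Real.rpow_nonneg h2.le b)]
    calc -Real.log (1-x) * (x ^ c * (1-x) ^ b) ≤ (2*x) * (x ^ c * 2 ^ |b|) := by
          apply mul_le_mul hlog ?_ (by positivity) (by positivity)
          exact mul_le_mul_of_nonneg_left hb1 (Real.rpow_nonneg hx0.le c)
      _ = 2 * 2 ^ |b| * (x ^ c * x) := by ring
      _ = 2 * 2 ^ |b| * x ^ (c+1) := by rw [← Real.rpow_add_one hx0.ne']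
  have hB : IntegrableOn f (Ico (1/2 : ℝ) 1) := by
    set ε := (b+1)/2 with hε
    have hεpos : 0 < ε := by rw [hε]; linarith
    have hg : IntegrableOn (fun x : ℝ => 2 ^ |c| / ε * (1-x) ^ (b - ε)) (Ico (1/2 : ℝ) 1) :=
      (int_one_sub_rpow (show -1 < b - ε by rw [hε]; linarith)).const_mul _
    refine hg.integrable.mono' (hmeas _ (fun x hx => ⟨by linarith [hx.1], hx.2⟩) measurableSet_Ico) ?_
    rw [ae_restrict_iff' measurableSet_Ico]
    filter_upwards with x hx
    have hx0 : (0:ℝ) < x := by linarith [hx.1]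
    have h2 : (0:ℝ) < 1 - x := by linarith [hx.2]
    have hlog : -Real.log (1-x) ≤ (1-x) ^ (-ε) / ε := neg_log_le_near_one hx0 hx.2 hεpos
    have hxc : x ^ c ≤ 2 ^ |c| := bound_rpow_near_one hx.1 hx.2.le
    have hlogpos : Real.log (1-x) ≤ 0 := Real.log_nonpos (by linarith) (by linarith)
    rw [hf]
    simp only [norm_mul, Real.norm_eq_abs]
    rw [abs_of_nonpos hlogpos, abs_of_nonneg (Real.rpow_nonneg hx0.le c),
      abs_of_nonneg (Real.rpow_nonneg h2.le b)]
    calc -Real.log (1-x) * (x ^ c * (1-x) ^ b)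
        ≤ ((1-x) ^ (-ε) / ε) * (2 ^ |c| * (1-x) ^ b) := by
          apply mul_le_mul hlog ?_ (by positivity) (by positivity)
          exact mul_le_mul_of_nonneg_right hxc (Real.rpow_nonneg h2.le b)
      _ = 2 ^ |c| / ε * ((1-x) ^ (-ε) * (1-x) ^ b) := by ring
      _ = 2 ^ |c| / ε * (1-x) ^ (b - ε) := by
          rw [← Real.rpow_add h2]; ring_nf
  exact (hA.union hB).mono_set (fun x hx => by
    rcases le_or_gt (1/2 : ℝ) x with h | h
    · exact Or.inr ⟨h, hx.2⟩
    · exact Or.inl ⟨hx.1, h⟩)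

lemma integrableOn_pow_pow (c b : ℝ) (hc : -1 < c) (hb : -1 < b) :
    IntegrableOn (fun x : ℝ => x ^ c * (1-x) ^ b) (Ioo 0 1) := by
  set f := fun x : ℝ => x ^ c * (1-x) ^ b with hf
  have hmeas : ∀ s ⊆ Ioo (0:ℝ) 1, MeasurableSet s → AEStronglyMeasurable f (volume.restrict s) :=
    fun s hs hms => ((contOn_aux2 c b).mono hs).aestronglyMeasurable hms
  have hA : IntegrableOn f (Ioo 0 (1/2 : ℝ)) := by
    have hg : IntegrableOn (fun x : ℝ => 2 ^ |b| * x ^ c) (Ioo 0 (1/2 : ℝ)) := by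
      have := (intervalIntegral.intervalIntegrable_rpow' hc (a := 0) (b := (1/2:ℝ)))
      have h2 := (intervalIntegrable_iff_integrableOn_Ioc_of_le (by norm_num : (0:ℝ) ≤ 1/2)).mp this
      exact ((h2.mono_set Ioo_subset_Ioc_self).const_mul _)
    refine hg.integrable.mono' (hmeas _ (fun x hx => ⟨hx.1, by linarith [hx.2]⟩) measurableSet_Ioo) ?_
    rw [ae_restrict_iff' measurableSet_Ioo]
    filter_upwards with x hx
    have hx0 : (0:ℝ) < x := hx.1
    have h2 : (0:ℝ) < 1 - x := by linarith [hx.2]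
    have hb1 : (1-x) ^ b ≤ 2 ^ |b| := bound_rpow_near_one (by linarith [hx.2]) (by linarith)
    rw [hf]
    simp only [norm_mul, Real.norm_eq_abs]
    rw [abs_of_nonneg (Real.rpow_nonneg hx0.le c), abs_of_nonneg (Real.rpow_nonneg h2.le b)]
    calc x ^ c * (1-x) ^ b ≤ x ^ c * 2 ^ |b| :=
          mul_le_mul_of_nonneg_left hb1 (Real.rpow_nonneg hx0.le c)
      _ = 2 ^ |b| * x ^ c := by ring
  have hB : IntegrableOn f (Ico (1/2 : ℝ) 1) := by
    have hg : IntegrableOn (fun x : ℝ => 2 ^ |c| * (1-x) ^ b) (Ico (1/2 : ℝ) 1) :=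
      (int_one_sub_rpow hb).const_mul _
    refine hg.integrable.mono' (hmeas _ (fun x hx => ⟨by linarith [hx.1], hx.2⟩) measurableSet_Ico) ?_
    rw [ae_restrict_iff' measurableSet_Ico]
    filter_upwards with x hx
    have hx0 : (0:ℝ) < x := by linarith [hx.1]
    have h2 : (0:ℝ) < 1 - x := by linarith [hx.2]
    have hxc : x ^ c ≤ 2 ^ |c| := bound_rpow_near_one hx.1 hx.2.le
    rw [hf]
    simp only [norm_mul, Real.norm_eq_abs]
    rw [abs_of_nonneg (Real.rpow_nonneg hx0.le c), abs_of_nonneg (Real.rpow_nonneg h2.le b)]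
    exact mul_le_mul_of_nonneg_right hxc (Real.rpow_nonneg h2.le b)
  exact (hA.union hB).mono_set (fun x hx => by
    rcases le_or_gt (1/2 : ℝ) x with h | h
    · exact Or.inr ⟨h, hx.2⟩
    · exact Or.inl ⟨hx.1, h⟩)


lemma real_beta_integral (a b : ℝ) (ha : 0 < a) (hb : 0 < b) :
    ∫ x in Ioo (0:ℝ) 1, x ^ (a-1) * (1-x) ^ (b-1) = betaB a b := by
  have key := Complex.Gamma_mul_Gamma_eq_betaIntegral (s := (a:ℂ)) (t := (b:ℂ))
    (by simpa using ha) (by simpa using hb)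
  have hJ : Complex.betaIntegral a b = ((∫ x in (0:ℝ)..1, x ^ (a-1) * (1-x) ^ (b-1) : ℝ) : ℂ) := by
    rw [Complex.betaIntegral, ← intervalIntegral.integral_ofReal]
    apply intervalIntegral.integral_congr
    intro x hx
    rw [Set.uIcc_of_le (by norm_num : (0:ℝ) ≤ 1)] at hx
    push_cast
    rw [Complex.ofReal_cpow hx.1 (a-1), Complex.ofReal_cpow (by linarith [hx.2]) (b-1)]
    push_cast
    ring
  rw [hJ, ← Complex.ofReal_add, Complex.Gamma_ofReal, Complex.Gamma_ofReal,
    Complex.Gamma_ofReal, ← Complex.ofReal_mul, ← Complex.ofReal_mul] at key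
  have hreal : Real.Gamma a * Real.Gamma b
      = Real.Gamma (a+b) * ∫ x in (0:ℝ)..1, x ^ (a-1) * (1-x) ^ (b-1) :=
    Complex.ofReal_injective key
  have hΓ : Real.Gamma (a+b) ≠ 0 := (Real.Gamma_pos_of_pos (by linarith)).ne'
  have : (∫ x in (0:ℝ)..1, x ^ (a-1) * (1-x) ^ (b-1)) = betaB a b := by
    rw [betaB, hreal, mul_comm, mul_div_assoc, div_self hΓ, mul_one]
  rw [← this, intervalIntegral.integral_of_le (by norm_num : (0:ℝ) ≤ 1),
    ← integral_Ioc_eq_integral_Ioo]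

lemma betaB_pos {a b : ℝ} (ha : 0 < a) (hb : 0 < b) : 0 < betaB a b := by
  unfold betaB
  have := Real.Gamma_pos_of_pos ha
  have := Real.Gamma_pos_of_pos hb
  have := Real.Gamma_pos_of_pos (show (0:ℝ) < a + b by linarith)
  positivity

lemma tendsto_H_zero {a b : ℝ} (ha : 0 < a) (hb : 0 < b) :
    Tendsto (fun x : ℝ => -Real.log (1-x) * (x ^ (a-1) * (1-x) ^ b)) (𝓝[>] (0:ℝ)) (𝓝 0) := by
  apply squeeze_zero' (g := fun x : ℝ => 2 * x ^ a)
  · filter_upwards [Ioc_mem_nhdsGT_of_mem (by norm_num : (0:ℝ) ∈ Ico (0:ℝ) (1/2))] with x hx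
    have hx0 : (0:ℝ) < x := hx.1
    have h2 : (0:ℝ) < 1 - x := by linarith [hx.2]
    have hlog : Real.log (1-x) ≤ 0 := Real.log_nonpos (by linarith) (by linarith)
    exact mul_nonneg (by linarith) (by positivity)
  · filter_upwards [Ioc_mem_nhdsGT_of_mem (by norm_num : (0:ℝ) ∈ Ico (0:ℝ) (1/2))] with x hx
    have hx0 : (0:ℝ) < x := hx.1
    have h2 : (0:ℝ) < 1 - x := by linarith [hx.2]
    have hlog : -Real.log (1-x) ≤ 2 * x := neg_log_le_near_zero hx0 hx.2
    have hb1 : (1-x) ^ b ≤ 1 := Real.rpow_le_one h2.le (by linarith) hb.le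
    calc -Real.log (1-x) * (x ^ (a-1) * (1-x) ^ b)
        ≤ (2*x) * (x ^ (a-1) * 1) := by
          apply mul_le_mul hlog ?_ (by positivity) (by positivity)
          exact mul_le_mul_of_nonneg_left hb1 (Real.rpow_nonneg hx0.le _)
      _ = 2 * (x ^ (a-1) * x) := by ring
      _ = 2 * x ^ a := by rw [← Real.rpow_add_one hx0.ne']; ring_nf
  · have h0 : Tendsto (fun x : ℝ => x ^ a) (𝓝[>] (0:ℝ)) (𝓝 0) := by
      have := (Real.continuousAt_rpow_const 0 a (Or.inr ha.le)).tendsto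
      rw [Real.zero_rpow ha.ne'] at this
      exact this.mono_left nhdsWithin_le_nhds
    simpa using h0.const_mul 2

lemma tendsto_H_one {a b : ℝ} (ha : 0 < a) (hb : 0 < b) :
    Tendsto (fun x : ℝ => -Real.log (1-x) * (x ^ (a-1) * (1-x) ^ b)) (𝓝[<] (1:ℝ)) (𝓝 0) := by
  have tsub : Tendsto (fun x : ℝ => 1 - x) (𝓝[<] (1:ℝ)) (𝓝[>] (0:ℝ)) := by
    apply tendsto_nhdsWithin_iff.mpr
    constructor
    · have : Tendsto (fun x : ℝ => 1 - x) (𝓝 1) (𝓝 0) :=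
        (continuous_const.sub continuous_id).tendsto' 1 0 (by norm_num)
      exact this.mono_left nhdsWithin_le_nhds
    · filter_upwards [eventually_mem_nhdsWithin] with x hx
      simp only [mem_Iio] at hx
      simp only [mem_Ioi]; linarith
  have t1 : Tendsto (fun x : ℝ => Real.log (1-x) * (1-x) ^ b) (𝓝[<] (1:ℝ)) (𝓝 0) :=
    (tendsto_log_mul_rpow_nhdsGT_zero hb).comp tsub
  have t2 : Tendsto (fun x : ℝ => -(x ^ (a-1))) (𝓝[<] (1:ℝ)) (𝓝 (-1)) := by
    have := (Real.continuousAt_rpow_const 1 (a-1) (Or.inl one_ne_zero)).tendsto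
    rw [Real.one_rpow] at this
    exact (this.mono_left nhdsWithin_le_nhds).neg
  have := t1.mul t2
  rw [zero_mul] at this
  apply this.congr
  intro x; ring

lemma hasDerivAt_H {a b : ℝ} {x : ℝ} (hx : x ∈ Ioo (0:ℝ) 1) :
    HasDerivAt (fun x : ℝ => -Real.log (1-x) * (x ^ (a-1) * (1-x) ^ b))
      (-Real.log (1-x) * ((a-1)*(x ^ (a-2) * (1-x) ^ b) - b*(x ^ (a-1) * (1-x) ^ (b-1)))
        + x ^ (a-1) * (1-x) ^ (b-1)) x := by
  have hx0 : (0:ℝ) < x := hx.1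
  have h2 : (0:ℝ) < 1 - x := by linarith [hx.2]
  have hid : HasDerivAt (fun x : ℝ => 1 - x) (-1) x := (hasDerivAt_id x).const_sub 1
  have hd1 : HasDerivAt (fun x : ℝ => x ^ (a-1)) ((a-1) * x ^ (a-2)) x := by
    have := Real.hasDerivAt_rpow_const (x := x) (p := a-1) (Or.inl hx0.ne')
    simpa [show a-1-1 = a-2 by ring] using this
  have hd2 : HasDerivAt (fun x : ℝ => (1-x) ^ b) (-1 * b * (1-x) ^ (b-1)) x :=
    hid.rpow_const (Or.inl h2.ne')
  have hd3 : HasDerivAt (fun x : ℝ => -Real.log (1-x)) (-(-1 / (1-x))) x := (hid.log h2.ne').neg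
  have hF := hd1.mul hd2
  have hH := hd3.mul hF
  refine hH.congr_deriv ?_
  simp only [Pi.mul_apply]
  rw [Real.rpow_sub_one h2.ne' b]
  field_simp
  ring

lemma key_integral (α β : ℝ) (hα : 0 < α) (hβ : 0 < β) :
    -(α-1) * (∫ x in Ioo (0:ℝ) 1, Real.log (1-x) * (x ^ (α-2) * (1-x) ^ β))
      + β * (∫ x in Ioo (0:ℝ) 1, Real.log (1-x) * (x ^ (α-1) * (1-x) ^ (β-1)))
      = -betaB α β := by
  have hI1 : IntegrableOn (fun x : ℝ => Real.log (1-x) * (x ^ (α-2) * (1-x) ^ β)) (Ioo 0 1) :=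
    integrableOn_log_pow (α-2) β (by linarith) (by linarith)
  have hI2 : IntegrableOn (fun x : ℝ => Real.log (1-x) * (x ^ (α-1) * (1-x) ^ (β-1))) (Ioo 0 1) :=
    integrableOn_log_pow (α-1) (β-1) (by linarith) (by linarith)
  have hp : IntegrableOn (fun x : ℝ => x ^ (α-1) * (1-x) ^ (β-1)) (Ioo 0 1) :=
    integrableOn_pow_pow (α-1) (β-1) (by linarith) (by linarith)
  set f' := fun x : ℝ =>
    -Real.log (1-x) * ((α-1)*(x ^ (α-2) * (1-x) ^ β) - β*(x ^ (α-1) * (1-x) ^ (β-1)))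
      + x ^ (α-1) * (1-x) ^ (β-1) with hf'def
  have hcomb : IntegrableOn
      (fun x : ℝ => (-(α-1)) * (Real.log (1-x) * (x ^ (α-2) * (1-x) ^ β))
        + β * (Real.log (1-x) * (x ^ (α-1) * (1-x) ^ (β-1)))
        + x ^ (α-1) * (1-x) ^ (β-1)) (Ioo 0 1) :=
    ((hI1.const_mul _).add (hI2.const_mul _)).add hp
  have heq : EqOn (fun x : ℝ => (-(α-1)) * (Real.log (1-x) * (x ^ (α-2) * (1-x) ^ β))
        + β * (Real.log (1-x) * (x ^ (α-1) * (1-x) ^ (β-1)))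
        + x ^ (α-1) * (1-x) ^ (β-1)) f' (Ioo 0 1) := by
    intro x _; simp only [hf'def]; ring
  have hf' : IntegrableOn f' (Ioo 0 1) := hcomb.congr_fun heq measurableSet_Ioo
  have hInt : IntervalIntegrable f' volume 0 1 := by
    rw [intervalIntegrable_iff_integrableOn_Ioc_of_le (by norm_num : (0:ℝ) ≤ 1)]
    exact hf'.congr_set_ae Ioo_ae_eq_Ioc.symm
  have hFTC : (∫ y in (0:ℝ)..1, f' y) = 0 - 0 :=
    intervalIntegral.integral_eq_sub_of_hasDerivAt_of_tendsto (by norm_num)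
      (fun x hx => hasDerivAt_H hx) hInt (tendsto_H_zero hα hβ) (tendsto_H_one hα hβ)
  rw [intervalIntegral.integral_of_le (by norm_num : (0:ℝ) ≤ 1),
    integral_Ioc_eq_integral_Ioo] at hFTC
  have hsplit : (∫ x in Ioo (0:ℝ) 1, f' x)
      = (-(α-1)) * (∫ x in Ioo (0:ℝ) 1, Real.log (1-x) * (x ^ (α-2) * (1-x) ^ β))
        + β * (∫ x in Ioo (0:ℝ) 1, Real.log (1-x) * (x ^ (α-1) * (1-x) ^ (β-1)))
        + ∫ x in Ioo (0:ℝ) 1, x ^ (α-1) * (1-x) ^ (β-1) := by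
    have ha1 : IntegrableOn (fun x : ℝ => (-(α-1)) * (Real.log (1-x) * (x ^ (α-2) * (1-x) ^ β))
        + β * (Real.log (1-x) * (x ^ (α-1) * (1-x) ^ (β-1)))) (Ioo 0 1) :=
      (hI1.const_mul _).add (hI2.const_mul _)
    rw [← setIntegral_congr_fun measurableSet_Ioo heq]
    rw [integral_add ha1 hp, integral_add (hI1.const_mul (-(α-1))) (hI2.const_mul β),
      MeasureTheory.integral_const_mul, MeasureTheory.integral_const_mul]
  rw [hsplit, real_beta_integral α β hα hβ] at hFTC
  linarith [hFTC]



theorem beta_score_identity_g_one_sub (α β : ℝ) (hα : 0 < α) (hβ : 0 < β) :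
    -α * betaE α β (fun x => (1 - x) / x * Real.log (1 - x))
      + β * betaE α β (fun x => Real.log (1 - x))
      = -1 - betaE α β (fun x => (1 - x) / x * Real.log (1 - x)) := by
  have hBv : 0 < betaB α β := betaB_pos hα hβ
  have hE1 : betaE α β (fun x => (1 - x) / x * Real.log (1 - x))
      = (∫ x in Ioo (0:ℝ) 1, Real.log (1-x) * (x ^ (α-2) * (1-x) ^ β)) / betaB α β := by
    unfold betaE betaPDF
    rw [← integral_div]
    apply setIntegral_congr_fun measurableSet_Ioo
    intro x hx
    have hx0 : (0:ℝ) < x := hx.1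
    have h2 : (0:ℝ) < 1 - x := by linarith [hx.2]
    have e1 : x ^ (α-2) = x ^ (α-1) / x := by
      rw [show α-2 = α-1-1 by ring, Real.rpow_sub_one hx0.ne']
    have e2 : (1-x) ^ β = (1-x) ^ (β-1) * (1-x) := by
      rw [← Real.rpow_add_one h2.ne']; ring_nf
    simp only
    rw [e1, e2]
    field_simp
  have hE2 : betaE α β (fun x => Real.log (1 - x))
      = (∫ x in Ioo (0:ℝ) 1, Real.log (1-x) * (x ^ (α-1) * (1-x) ^ (β-1))) / betaB α β := by
    unfold betaE betaPDF
    rw [← integral_div]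
    apply setIntegral_congr_fun measurableSet_Ioo
    intro x _
    simp only
    ring
  have key := key_integral α β hα hβ
  rw [hE1, hE2]
  field_simp
  simp only [← mul_assoc] at key
  linear_combination key
end

section
/- Let X ~ Beta(α, β) with α, β > 0. Define M₁ = E[X], M₂ = E[X·log(X/(1−X))], and M₃ = E[log(X/(1−X))]. Then the denominator M₂ − M₁·M₃ is strictly positive and α = M₁/(M₂ − M₁·M₃), β = (1 − M₁)/(M₂ − M₁·M₃). -/
open MeasureTheory Real Filter Set Topology

noncomputable def bf (a b x : ℝ) : ℝ := x ^ (a - 1) * (1 - x) ^ (b - 1)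

lemma bf_complex_eq {a b x : ℝ} (h0 : 0 ≤ x) (h1 : x ≤ 1) :
    ((bf a b x : ℝ) : ℂ) = (x:ℂ) ^ ((a:ℂ) - 1) * ((1:ℂ) - x) ^ ((b:ℂ) - 1) := by
  rw [bf, Complex.ofReal_mul, Complex.ofReal_cpow h0, Complex.ofReal_cpow (by linarith)]
  push_cast
  ring

lemma bf_intervalIntegral {a b : ℝ} (ha : 0 < a) (hb : 0 < b) :
    ∫ x in (0:ℝ)..1, bf a b x = betaB a b := by
  have key : Complex.betaIntegral a b = ((∫ x in (0:ℝ)..1, bf a b x : ℝ) : ℂ) := by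
    rw [Complex.betaIntegral, ← intervalIntegral.integral_ofReal]
    refine intervalIntegral.integral_congr_ae (MeasureTheory.ae_of_all _ (fun x hx => ?_))
    rw [uIoc_of_le zero_le_one] at hx
    exact (bf_complex_eq hx.1.le hx.2).symm
  have hG := Complex.Gamma_mul_Gamma_eq_betaIntegral
      (by simpa using ha : 0 < Complex.re a) (by simpa using hb : 0 < Complex.re b)
  rw [key] at hG
  have hG' : ((Real.Gamma a * Real.Gamma b : ℝ) : ℂ)
      = ((Real.Gamma (a+b) * ∫ x in (0:ℝ)..1, bf a b x : ℝ) : ℂ) := by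
    rw [show ((a:ℂ) + b) = ((a+b:ℝ):ℂ) by push_cast; ring] at hG
    simp only [Complex.Gamma_ofReal] at hG
    exact_mod_cast hG
  have := Complex.ofReal_injective hG'
  have hGab : Real.Gamma (a+b) ≠ 0 := (Real.Gamma_pos_of_pos (by linarith)).ne'
  rw [betaB]
  field_simp
  linarith [this]

lemma bf_integrableOn {a b : ℝ} (ha : 0 < a) (hb : 0 < b) :
    IntegrableOn (bf a b) (Ioo (0:ℝ) 1) := by
  have h := Complex.betaIntegral_convergent (u := a) (v := b)
      (by simpa using ha) (by simpa using hb)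
  rw [intervalIntegrable_iff_integrableOn_Ioo_of_le (zero_le_one : (0:ℝ) ≤ 1)] at h
  have h2 : IntegrableOn (fun (x:ℝ) => ((x:ℂ) ^ ((a:ℂ)-1) * ((1:ℂ)-x) ^ ((b:ℂ)-1)).re)
      (Ioo (0:ℝ) 1) := h.re
  refine h2.congr_fun (fun x hx => ?_) measurableSet_Ioo
  dsimp only
  rw [← bf_complex_eq hx.1.le hx.2.le, Complex.ofReal_re]
lemma bf_nonneg {a b x : ℝ} (h0 : 0 ≤ x) (h1 : x ≤ 1) : 0 ≤ bf a b x :=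
  mul_nonneg (Real.rpow_nonneg h0 _) (Real.rpow_nonneg (by linarith) _)

lemma bf_contOn (a b : ℝ) : ContinuousOn (bf a b) (Ioo (0:ℝ) 1) := by
  intro x hx
  have c1 : ContinuousAt (fun y : ℝ => y ^ (a-1)) x :=
    Real.continuousAt_rpow_const x _ (Or.inl hx.1.ne')
  have c2 : ContinuousAt (fun y : ℝ => (1-y) ^ (b-1)) x := by
    apply ContinuousAt.rpow_const
    · exact (continuous_const.sub continuous_id).continuousAt
    · exact Or.inl (by simp; intro h; nlinarith [hx.2])
  exact (c1.mul c2).continuousWithinAt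

lemma log_le_rpow {c x : ℝ} (hc : 0 < c) (h0 : 0 < x) (h1 : x < 1) :
    |Real.log x| ≤ (1/c) * x ^ (-c) := by
  have hlx : Real.log x ≤ 0 := Real.log_nonpos h0.le h1.le
  rw [abs_of_nonpos hlx]
  have hy : (0:ℝ) < x ^ (-c) := Real.rpow_pos_of_pos h0 _
  have h2 : Real.log (x ^ (-c)) ≤ x ^ (-c) := by
    linarith [Real.log_le_sub_one_of_pos hy]
  rw [Real.log_rpow h0] at h2
  calc -Real.log x = (1/c) * (-c * Real.log x) := by field_simp
    _ ≤ (1/c) * x ^ (-c) := mul_le_mul_of_nonneg_left h2 (by positivity)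

lemma log_bf_integrableOn {a b : ℝ} (ha : 0 < a) (hb : 0 < b) :
    IntegrableOn (fun x => Real.log x * bf a b x) (Ioo (0:ℝ) 1) := by
  have hmeas : AEStronglyMeasurable (fun x => Real.log x * bf a b x)
      (volume.restrict (Ioo (0:ℝ) 1)) := by
    refine ContinuousOn.aestronglyMeasurable ?_ measurableSet_Ioo
    exact ContinuousOn.mul (fun x hx => (Real.continuousAt_log hx.1.ne').continuousWithinAt)
      (bf_contOn a b)
  refine Integrable.mono' ((bf_integrableOn (half_pos ha) hb).const_mul (2/a)) hmeas ?_
  filter_upwards [ae_restrict_mem measurableSet_Ioo] with x hx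
  have h0 := hx.1
  have h1 := hx.2
  have hbf : 0 ≤ (1-x) ^ (b-1) := Real.rpow_nonneg (by linarith) _
  have hlog : |Real.log x| ≤ (2/a) * x ^ (-(a/2)) := by
    have := log_le_rpow (half_pos ha) h0 h1
    rw [one_div, inv_div] at this
    linarith
  have hxp : x ^ (-(a/2)) * x ^ (a-1) = x ^ (a/2 - 1) := by
    rw [← Real.rpow_add h0]; norm_num; ring_nf
  calc ‖Real.log x * bf a b x‖ = |Real.log x| * (x ^ (a-1) * (1-x)^(b-1)) := by
        rw [norm_eq_abs, abs_mul, bf, abs_of_nonneg (mul_nonneg (Real.rpow_nonneg h0.le _) hbf)]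
    _ ≤ ((2/a) * x ^ (-(a/2))) * (x ^ (a-1) * (1-x)^(b-1)) := by
        apply mul_le_mul_of_nonneg_right hlog
        exact mul_nonneg (Real.rpow_nonneg h0.le _) hbf
    _ = (2/a) * bf (a/2) b x := by
        rw [bf, ← hxp]; ring

lemma log1m_bf_integrableOn {a b : ℝ} (ha : 0 < a) (hb : 0 < b) :
    IntegrableOn (fun x => Real.log (1-x) * bf a b x) (Ioo (0:ℝ) 1) := by
  have hmeas : AEStronglyMeasurable (fun x => Real.log (1-x) * bf a b x)
      (volume.restrict (Ioo (0:ℝ) 1)) := by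
    refine ContinuousOn.aestronglyMeasurable ?_ measurableSet_Ioo
    refine ContinuousOn.mul (fun x hx => ?_) (bf_contOn a b)
    exact ((Real.continuousAt_log (by simp; intro h; nlinarith [hx.2] : (1:ℝ)-x ≠ 0)).comp
      ((continuous_const.sub continuous_id).continuousAt)).continuousWithinAt
  refine Integrable.mono' ((bf_integrableOn ha (half_pos hb)).const_mul (2/b)) hmeas ?_
  filter_upwards [ae_restrict_mem measurableSet_Ioo] with x hx
  have h0 := hx.1
  have h1 := hx.2
  have h1x : (0:ℝ) < 1 - x := by linarith
  have hbf : 0 ≤ x ^ (a-1) := Real.rpow_nonneg h0.le _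
  have hlog : |Real.log (1-x)| ≤ (2/b) * (1-x) ^ (-(b/2)) := by
    have := log_le_rpow (half_pos hb) h1x (by linarith)
    rw [one_div, inv_div] at this
    linarith
  have hxp : (1-x) ^ (-(b/2)) * (1-x) ^ (b-1) = (1-x) ^ (b/2 - 1) := by
    rw [← Real.rpow_add h1x]; ring_nf
  calc ‖Real.log (1-x) * bf a b x‖ = |Real.log (1-x)| * (x ^ (a-1) * (1-x)^(b-1)) := by
        rw [norm_eq_abs, abs_mul, bf,
          abs_of_nonneg (mul_nonneg hbf (Real.rpow_nonneg h1x.le _))]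
    _ ≤ ((2/b) * (1-x) ^ (-(b/2))) * (x ^ (a-1) * (1-x)^(b-1)) := by
        apply mul_le_mul_of_nonneg_right hlog
        exact mul_nonneg hbf (Real.rpow_nonneg h1x.le _)
    _ = (2/b) * bf a (b/2) x := by
        rw [bf, ← hxp]; ring

lemma bf_mul_x {a b x : ℝ} (h0 : 0 < x) : x * bf a b x = bf (a+1) b x := by
  rw [bf, bf, show a + 1 - 1 = (a-1) + 1 by ring, Real.rpow_add_one h0.ne']
  ring

lemma bf_mul_1mx {a b x : ℝ} (h1 : x < 1) : (1-x) * bf a b x = bf a (b+1) x := by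
  have h1x : (1:ℝ) - x ≠ 0 := by intro h; nlinarith
  rw [bf, bf, show b + 1 - 1 = (b-1) + 1 by ring, Real.rpow_add_one h1x]
  ring

lemma comboInt {a b : ℝ} (ha : 0 < a) (hb : 0 < b) :
    IntegrableOn (fun x => (a*(1-x) - b*x) * (Real.log x - Real.log (1-x)) * bf a b x)
      (Ioo (0:ℝ) 1) := by
  have H : IntegrableOn (fun x =>
      a * (Real.log x * bf a (b+1) x) - a * (Real.log (1-x) * bf a (b+1) x)
      - b * (Real.log x * bf (a+1) b x) + b * (Real.log (1-x) * bf (a+1) b x))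
      (Ioo (0:ℝ) 1) := by
    exact ((((log_bf_integrableOn ha (by linarith)).const_mul a).sub
      ((log1m_bf_integrableOn ha (by linarith)).const_mul a)).sub
      ((log_bf_integrableOn (by linarith) hb).const_mul b)).add
      ((log1m_bf_integrableOn (by linarith) hb).const_mul b)
  refine H.congr_fun (fun x hx => ?_) measurableSet_Ioo
  dsimp only
  rw [← bf_mul_x hx.1, ← bf_mul_1mx hx.2]
  ring

lemma key_identity {a b : ℝ} (ha : 0 < a) (hb : 0 < b) :
    ∫ x in Ioo (0:ℝ) 1, (a*(1-x) - b*x) * (Real.log x - Real.log (1-x)) * bf a b x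
      = -betaB a b := by
  set F : ℝ → ℝ := fun x => x ^ a * (1-x) ^ b * (Real.log x - Real.log (1-x)) with hF
  set F' : ℝ → ℝ := fun x =>
    (a*(1-x) - b*x) * (Real.log x - Real.log (1-x)) * bf a b x + bf a b x with hF'
  have hderiv : ∀ x ∈ Ioo (0:ℝ) 1, HasDerivAt F (F' x) x := by
    intro x hx
    have h0 : (0:ℝ) < x := hx.1
    have h1x : (0:ℝ) < 1 - x := by linarith [hx.2]
    have d1 : HasDerivAt (fun y : ℝ => y ^ a) (a * x ^ (a-1)) x :=
      Real.hasDerivAt_rpow_const (Or.inl h0.ne')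
    have ds : HasDerivAt (fun y : ℝ => 1 - y) (-1) x := by
      simpa using (hasDerivAt_id x).const_sub 1
    have d2 : HasDerivAt (fun y : ℝ => (1-y) ^ b) (b * (1-x)^(b-1) * (-1)) x :=
      (Real.hasDerivAt_rpow_const (Or.inl h1x.ne')).comp x ds
    have d3 : HasDerivAt Real.log x⁻¹ x := Real.hasDerivAt_log h0.ne'
    have d4 : HasDerivAt (fun y : ℝ => Real.log (1-y)) ((1-x)⁻¹ * (-1)) x :=
      (Real.hasDerivAt_log h1x.ne').comp x ds
    have total := (d1.mul d2).mul (d3.sub d4)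
    refine total.congr_deriv (Eq.symm ?_)
    simp only [Pi.mul_apply, Pi.sub_apply]
    have e1 : x ^ a = x ^ (a-1) * x := by
      rw [← Real.rpow_add_one h0.ne' (a-1)]; norm_num
    have e2 : (1-x) ^ b = (1-x) ^ (b-1) * (1-x) := by
      rw [← Real.rpow_add_one h1x.ne' (b-1)]; norm_num
    show (a * (1 - x) - b * x) * (Real.log x - Real.log (1 - x)) * bf a b x + bf a b x = _
    rw [bf, e1, e2]
    field_simp
    ring
  have hint : IntervalIntegrable F' volume 0 1 := by
    rw [intervalIntegrable_iff_integrableOn_Ioo_of_le (zero_le_one : (0:ℝ) ≤ 1)]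
    exact (comboInt ha hb).add (bf_integrableOn ha hb)
  have hlim0 : Tendsto F (𝓝[>] (0:ℝ)) (𝓝 0) := by
    have t1 : Tendsto (fun x : ℝ => Real.log x * x ^ a) (𝓝[>] (0:ℝ)) (𝓝 0) :=
      tendsto_log_mul_rpow_nhdsGT_zero ha
    have t2 : Tendsto (fun x : ℝ => (1-x) ^ b) (𝓝[>] (0:ℝ)) (𝓝 1) := by
      have c : ContinuousAt (fun x : ℝ => (1-x) ^ b) 0 :=
        ContinuousAt.rpow_const ((continuous_const.sub continuous_id).continuousAt)
          (Or.inl (by norm_num))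
      simpa [Real.one_rpow] using c.tendsto.mono_left nhdsWithin_le_nhds
    have t3 : Tendsto (fun x : ℝ => x ^ a) (𝓝[>] (0:ℝ)) (𝓝 0) := by
      have c := (Real.continuousAt_rpow_const 0 a (Or.inr ha.le)).tendsto
      simpa [Real.zero_rpow ha.ne'] using c.mono_left nhdsWithin_le_nhds
    have t4 : Tendsto (fun x : ℝ => Real.log (1-x)) (𝓝[>] (0:ℝ)) (𝓝 0) := by
      have c : ContinuousAt (fun x : ℝ => Real.log (1-x)) 0 :=
        (Real.continuousAt_log (by norm_num)).comp
          ((continuous_const.sub continuous_id).continuousAt)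
      simpa using c.tendsto.mono_left nhdsWithin_le_nhds
    have comb := (t1.mul t2).sub (t3.mul (t2.mul t4))
    norm_num at comb
    exact comb.congr (fun x => by rw [hF]; ring)
  have hlim1 : Tendsto F (𝓝[<] (1:ℝ)) (𝓝 0) := by
    have hmap : Tendsto (fun x : ℝ => 1-x) (𝓝[<] (1:ℝ)) (𝓝[>] (0:ℝ)) := by
      refine tendsto_nhdsWithin_of_tendsto_nhds_of_eventually_within _ ?_ ?_
      · have h : Tendsto (fun x : ℝ => 1 - x) (𝓝 (1:ℝ)) (𝓝 (1-1)) :=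
          (continuous_const.sub continuous_id).tendsto 1
        simpa using h.mono_left nhdsWithin_le_nhds
      · filter_upwards [self_mem_nhdsWithin] with x hx
        simp only [Set.mem_Iio] at hx
        simp only [Set.mem_Ioi]
        linarith
    have t1 : Tendsto (fun x : ℝ => Real.log (1-x) * (1-x) ^ b) (𝓝[<] (1:ℝ)) (𝓝 0) :=
      (tendsto_log_mul_rpow_nhdsGT_zero hb).comp hmap
    have t2 : Tendsto (fun x : ℝ => x ^ a) (𝓝[<] (1:ℝ)) (𝓝 1) := by
      have c : ContinuousAt (fun x : ℝ => x ^ a) 1 :=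
        Real.continuousAt_rpow_const 1 a (Or.inl one_ne_zero)
      simpa [Real.one_rpow] using c.tendsto.mono_left nhdsWithin_le_nhds
    have t3 : Tendsto (fun x : ℝ => Real.log x) (𝓝[<] (1:ℝ)) (𝓝 0) := by
      have c : ContinuousAt Real.log 1 := Real.continuousAt_log one_ne_zero
      simpa using c.tendsto.mono_left nhdsWithin_le_nhds
    have t4 : Tendsto (fun x : ℝ => (1-x) ^ b) (𝓝[<] (1:ℝ)) (𝓝 0) := by
      have c := (Real.continuousAt_rpow_const 0 b (Or.inr hb.le)).tendsto
      have := c.comp (hmap.mono_right nhdsWithin_le_nhds)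
      simpa [Function.comp_def, Real.zero_rpow hb.ne'] using this
    have comb := ((t2.mul t4).mul t3).sub (t2.mul t1)
    norm_num at comb
    exact comb.congr (fun x => by rw [hF]; ring)
  have hFTC := intervalIntegral.integral_eq_sub_of_hasDerivAt_of_tendsto
    (zero_lt_one) hderiv hint hlim0 hlim1
  rw [intervalIntegral.integral_of_le (zero_le_one : (0:ℝ) ≤ 1),
    integral_Ioc_eq_integral_Ioo] at hFTC
  have hsplit : ∫ x in Ioo (0:ℝ) 1, F' x
      = (∫ x in Ioo (0:ℝ) 1, (a*(1-x) - b*x) * (Real.log x - Real.log (1-x)) * bf a b x)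
        + ∫ x in Ioo (0:ℝ) 1, bf a b x :=
    integral_add (comboInt ha hb) (bf_integrableOn ha hb)
  have hIB : ∫ x in Ioo (0:ℝ) 1, bf a b x = betaB a b := by
    rw [← integral_Ioc_eq_integral_Ioo,
      ← intervalIntegral.integral_of_le (zero_le_one : (0:ℝ) ≤ 1)]
    exact bf_intervalIntegral ha hb
  rw [hsplit, hIB] at hFTC
  linarith

lemma betaE_eq (a b : ℝ) (h : ℝ → ℝ) :
    betaE a b h = (∫ x in Ioo (0:ℝ) 1, h x * bf a b x) / betaB a b := by
  rw [betaE, ← integral_div]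
  congr 1
  funext x
  rw [betaPDF, bf]
  ring

lemma bf_integral {a b : ℝ} (ha : 0 < a) (hb : 0 < b) :
    ∫ x in Ioo (0:ℝ) 1, bf a b x = betaB a b := by
  rw [← integral_Ioc_eq_integral_Ioo,
    ← intervalIntegral.integral_of_le (zero_le_one : (0:ℝ) ≤ 1)]
  exact bf_intervalIntegral ha hb


theorem beta_tamae_population_identities (α β : ℝ) (hα : 0 < α) (hβ : 0 < β) :
    0 < betaE α β (fun x => x * Real.log (x / (1 - x)))
        - betaE α β (fun x => x) * betaE α β (fun x => Real.log (x / (1 - x))) ∧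
    α = betaE α β (fun x => x) /
        (betaE α β (fun x => x * Real.log (x / (1 - x)))
          - betaE α β (fun x => x) * betaE α β (fun x => Real.log (x / (1 - x)))) ∧
    β = (1 - betaE α β (fun x => x)) /
        (betaE α β (fun x => x * Real.log (x / (1 - x)))
          - betaE α β (fun x => x) * betaE α β (fun x => Real.log (x / (1 - x)))) := by
  have hab : (0:ℝ) < α + β := by linarith
  have hB : 0 < betaB α β := betaB_pos hα hβ
  set J := ∫ x in Ioo (0:ℝ) 1, Real.log (x/(1-x)) * bf α β x with hJ
  set K := ∫ x in Ioo (0:ℝ) 1, (x * Real.log (x/(1-x))) * bf α β x with hK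
  -- M1
  have hBrec : betaB (α+1) β = α/(α+β) * betaB α β := by
    rw [betaB, betaB, Real.Gamma_add_one hα.ne', show α+1+β = (α+β)+1 by ring,
      Real.Gamma_add_one hab.ne']
    have h1 : Real.Gamma (α+β) ≠ 0 := (Real.Gamma_pos_of_pos hab).ne'
    field_simp
  have hM1 : betaE α β (fun x => x) = α/(α+β) := by
    rw [betaE_eq]
    have e : ∫ x in Ioo (0:ℝ) 1, x * bf α β x = ∫ x in Ioo (0:ℝ) 1, bf (α+1) β x :=
      setIntegral_congr_fun measurableSet_Ioo (fun x hx => bf_mul_x hx.1)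
    rw [e, bf_integral (by linarith) hβ, hBrec]
    field_simp
  have hM3 : betaE α β (fun x => Real.log (x/(1-x))) = J / betaB α β := betaE_eq α β _
  have hM2 : betaE α β (fun x => x * Real.log (x/(1-x))) = K / betaB α β := betaE_eq α β _
  -- integrability of J and K integrands
  have h1mx : ∀ x : ℝ, x ∈ Ioo (0:ℝ) 1 → (1:ℝ) - x ≠ 0 := by
    intro x hx h
    nlinarith [hx.2]
  have intJ : IntegrableOn (fun x => Real.log (x/(1-x)) * bf α β x) (Ioo (0:ℝ) 1) := by
    have base : IntegrableOn
        (fun x => Real.log x * bf α β x - Real.log (1-x) * bf α β x) (Ioo (0:ℝ) 1) :=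
      (log_bf_integrableOn hα hβ).sub (log1m_bf_integrableOn hα hβ)
    refine base.congr_fun (fun x hx => ?_) measurableSet_Ioo
    rw [Real.log_div hx.1.ne' (h1mx x hx)]
    ring
  have intK : IntegrableOn (fun x => (x * Real.log (x/(1-x))) * bf α β x) (Ioo (0:ℝ) 1) := by
    have base : IntegrableOn
        (fun x => Real.log x * bf (α+1) β x - Real.log (1-x) * bf (α+1) β x) (Ioo (0:ℝ) 1) :=
      (log_bf_integrableOn (by linarith) hβ).sub (log1m_bf_integrableOn (by linarith) hβ)
    refine base.congr_fun (fun x hx => ?_) measurableSet_Ioo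
    dsimp only
    rw [Real.log_div hx.1.ne' (h1mx x hx), ← bf_mul_x hx.1]
    ring
  -- key identity
  have key2 : α * J - (α+β) * K = -(betaB α β) := by
    have h := key_identity hα hβ
    have hcong : ∫ x in Ioo (0:ℝ) 1,
        (α*(1-x) - β*x) * (Real.log x - Real.log (1-x)) * bf α β x
        = ∫ x in Ioo (0:ℝ) 1,
          (α * (Real.log (x/(1-x)) * bf α β x)
            - (α+β) * ((x * Real.log (x/(1-x))) * bf α β x)) := by
      refine setIntegral_congr_fun measurableSet_Ioo (fun x hx => ?_)
      rw [Real.log_div hx.1.ne' (h1mx x hx)]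
      ring
    rw [hcong, integral_sub (intJ.const_mul α) (intK.const_mul (α+β)),
      integral_const_mul, integral_const_mul] at h
    rw [← hJ, ← hK] at h
    linarith
  have hD : betaE α β (fun x => x * Real.log (x / (1 - x)))
      - betaE α β (fun x => x) * betaE α β (fun x => Real.log (x / (1 - x)))
      = 1/(α+β) := by
    rw [hM2, hM1, hM3]
    rw [div_mul_div_comm, div_sub_div _ _ hB.ne' (by positivity : ((α+β) * betaB α β) ≠ 0),
      div_eq_div_iff (by positivity) (by positivity)]
    linear_combination (-(α+β) * betaB α β) * key2
  refine ⟨by rw [hD]; positivity, ?_, ?_⟩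
  · rw [hD, hM1]
    field_simp
  · rw [hD, hM1]
    field_simp
    ring
end
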